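/- Let m ≥ 2, let k be an integer with 1 ≤ k ≤ m−1, and let ℓ be a positive integer. Then c_{m,k+1}(ℓ+1) = c_{m,k+1}(ℓ) + c_{m,k}(ℓ), where c_{m,k}(ℓ) denotes the number of (m,k)-n-colored compositions of ℓ. -/

import Mathlib

/-- The number of `(m,k)`-`n`-colored compositions of `ℓ`: compositions where each part
whose position `i` (positions counted from 1) satisfies `i ≡ k (mod m)` gets a color in
`{1, …, pᵢ}`, i.e. `∑` over compositions of `∏` of the parts in positions `≡ k (mod m)`. -/
def mkColoredCount (m k ℓ : ℕ) : ℕ :=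
  ∑ c : Composition ℓ, ∏ i ∈ Finset.range c.blocks.length,
    if (i + 1) % m = k % m then c.blocks.getD i 1 else 1

namespace MkAux

/-- Weight of a list of blocks. -/
def Wt (m k : ℕ) (l : List ℕ) : ℕ :=
  ∏ i ∈ Finset.range l.length, if (i + 1) % m = k % m then l.getD i 1 else 1

lemma mkColoredCount_eq (m k ℓ : ℕ) :
    mkColoredCount m k ℓ = ∑ c : Composition ℓ, Wt m k c.blocks := rfl

lemma headI_cons_tail {l : List ℕ} (h : l ≠ []) : l.headI :: l.tail = l := by
  cases l with
  | nil => exact absurd rfl h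
  | cons a t => rfl

lemma headI_mem {l : List ℕ} (h : l ≠ []) : l.headI ∈ l := by
  cases l with
  | nil => exact absurd rfl h
  | cons a t => exact List.mem_cons_self

lemma blocks_ne_nil {ℓ : ℕ} (hℓ : 0 < ℓ) (c : Composition ℓ) : c.blocks ≠ [] := by
  intro h
  have := c.blocks_sum
  rw [h] at this
  simp at this
  omega

lemma headI_pos {ℓ : ℕ} (hℓ : 0 < ℓ) (c : Composition ℓ) : 0 < c.blocks.headI :=
  c.blocks_pos (headI_mem (blocks_ne_nil hℓ c))

lemma first_uncolored {m k : ℕ} (hm : 2 ≤ m) (hk1 : 1 ≤ k) (hk2 : k ≤ m - 1) :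
    1 % m ≠ (k + 1) % m := by
  have h1 : 1 % m = 1 := Nat.mod_eq_of_lt (by omega)
  rcases Nat.lt_or_ge (k + 1) m with h | h
  · rw [h1, Nat.mod_eq_of_lt h]; omega
  · have : k + 1 = m := by omega
    rw [h1, this, Nat.mod_self]; omega

/-- The weight of `a :: tl` with parameter `k+1`, as a shifted product over `tl`. -/
lemma Wt_cons {m k : ℕ} (hm : 2 ≤ m) (hk1 : 1 ≤ k) (hk2 : k ≤ m - 1) (a : ℕ) (tl : List ℕ) :
    Wt m (k + 1) (a :: tl)
      = ∏ i ∈ Finset.range tl.length,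
          if (i + 2) % m = (k + 1) % m then tl.getD i 1 else 1 := by
  unfold Wt
  rw [List.length_cons, Finset.prod_range_succ']
  have h0 : (if (0 + 1) % m = (k + 1) % m then (a :: tl).getD 0 1 else 1) = 1 := by
    rw [if_neg]
    simpa using first_uncolored hm hk1 hk2
  rw [h0, mul_one]
  refine Finset.prod_congr rfl fun i _ => ?_
  rfl

lemma Wt_cons_indep {m k : ℕ} (hm : 2 ≤ m) (hk1 : 1 ≤ k) (hk2 : k ≤ m - 1) (a b : ℕ)
    (tl : List ℕ) : Wt m (k + 1) (a :: tl) = Wt m (k + 1) (b :: tl) := by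
  rw [Wt_cons hm hk1 hk2, Wt_cons hm hk1 hk2]

lemma Wt_cons_one {m k : ℕ} (hm : 2 ≤ m) (hk1 : 1 ≤ k) (hk2 : k ≤ m - 1) (tl : List ℕ) :
    Wt m (k + 1) (1 :: tl) = Wt m k tl := by
  rw [Wt_cons hm hk1 hk2]
  refine Finset.prod_congr rfl fun i _ => ?_
  refine if_congr ?_ rfl rfl
  constructor
  · intro h
    have : i + 1 + 1 ≡ k + 1 [MOD m] := by
      simpa [Nat.ModEq, (by ring : i + 1 + 1 = i + 2)] using h
    exact Nat.ModEq.add_right_cancel' 1 this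
  · intro h
    have : i + 1 + 1 ≡ k + 1 [MOD m] := Nat.ModEq.add_right 1 h
    simpa [Nat.ModEq, (by ring : i + 1 + 1 = i + 2)] using this

/-- The equivalence `Composition ℓ ⊕ Composition ℓ ≃ Composition (ℓ+1)`. -/
def compEquiv (ℓ : ℕ) (hℓ : 0 < ℓ) : (Composition ℓ ⊕ Composition ℓ) ≃ Composition (ℓ + 1) where
  toFun x :=
    match x with
    | Sum.inl c =>
        ⟨1 :: c.blocks, by
          intro i hi
          rcases List.mem_cons.mp hi with h | h
          · omega
          · exact c.blocks_pos h, by simp [c.blocks_sum, Nat.add_comm]⟩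
    | Sum.inr c =>
        ⟨(c.blocks.headI + 1) :: c.blocks.tail, by
          intro i hi
          rcases List.mem_cons.mp hi with h | h
          · omega
          · exact c.blocks_pos (List.mem_of_mem_tail h), by
          have h := headI_cons_tail (blocks_ne_nil hℓ c)
          have hs : c.blocks.headI + c.blocks.tail.sum = ℓ := by
            conv_rhs => rw [← c.blocks_sum, ← h]
            simp
          simp only [List.sum_cons]
          omega⟩
  invFun c :=
    if h1 : c.blocks.headI = 1 then
      Sum.inl ⟨c.blocks.tail, by
        intro i hi
        exact c.blocks_pos (List.mem_of_mem_tail hi), by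
        have h := headI_cons_tail (blocks_ne_nil (by omega) c)
        have hs : c.blocks.headI + c.blocks.tail.sum = ℓ + 1 := by
          conv_rhs => rw [← c.blocks_sum, ← h]
          simp
        omega⟩
    else
      Sum.inr ⟨(c.blocks.headI - 1) :: c.blocks.tail, by
        intro i hi
        have hp := headI_pos (show 0 < ℓ + 1 by omega) c
        rcases List.mem_cons.mp hi with h | h
        · omega
        · exact c.blocks_pos (List.mem_of_mem_tail h), by
        have h := headI_cons_tail (blocks_ne_nil (by omega) c)
        have hp := headI_pos (show 0 < ℓ + 1 by omega) c
        have hs : c.blocks.headI + c.blocks.tail.sum = ℓ + 1 := by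
          conv_rhs => rw [← c.blocks_sum, ← h]
          simp
        simp only [List.sum_cons]
        omega⟩
  left_inv x := by
    match x with
    | Sum.inl c =>
        dsimp only
        rw [dif_pos (show (1 :: c.blocks).headI = 1 from rfl)]
        exact congrArg Sum.inl (Composition.ext rfl)
    | Sum.inr c =>
        have hp := headI_pos hℓ c
        dsimp only
        rw [dif_neg (by simp only [List.headI_cons]; omega)]
        congr 1
        apply Composition.ext
        simp only [List.headI_cons, List.tail_cons]
        have h2 : c.blocks.headI + 1 - 1 = c.blocks.headI := by omega
        rw [h2]
        exact headI_cons_tail (blocks_ne_nil hℓ c)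
  right_inv c := by
    dsimp only
    by_cases h1 : c.blocks.headI = 1
    · rw [dif_pos h1]
      apply Composition.ext
      dsimp only
      conv_rhs => rw [← headI_cons_tail (blocks_ne_nil (show 0 < ℓ + 1 by omega) c)]
      rw [h1]
    · rw [dif_neg h1]
      apply Composition.ext
      dsimp only [List.headI_cons, List.tail_cons]
      have hp := headI_pos (show 0 < ℓ + 1 by omega) c
      have h2 : c.blocks.headI - 1 + 1 = c.blocks.headI := by omega
      rw [h2]
      exact headI_cons_tail (blocks_ne_nil (by omega) c)

lemma compEquiv_inl_blocks {ℓ : ℕ} (hℓ : 0 < ℓ) (c : Composition ℓ) :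
    ((compEquiv ℓ hℓ) (Sum.inl c)).blocks = 1 :: c.blocks := rfl

lemma compEquiv_inr_blocks {ℓ : ℕ} (hℓ : 0 < ℓ) (c : Composition ℓ) :
    ((compEquiv ℓ hℓ) (Sum.inr c)).blocks = (c.blocks.headI + 1) :: c.blocks.tail := rfl

end MkAux

/-- `c_{m,k+1}(ℓ+1) = c_{m,k+1}(ℓ) + c_{m,k}(ℓ)` for `m ≥ 2`, `1 ≤ k ≤ m - 1`, `ℓ ≥ 1`. -/
theorem mkColoredCount_succ (m k ℓ : ℕ) (hm : 2 ≤ m) (hk1 : 1 ≤ k) (hk2 : k ≤ m - 1)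
    (hℓ : 0 < ℓ) :
    mkColoredCount m (k + 1) (ℓ + 1) = mkColoredCount m (k + 1) ℓ + mkColoredCount m k ℓ := by
  classical
  rw [MkAux.mkColoredCount_eq, MkAux.mkColoredCount_eq, MkAux.mkColoredCount_eq]
  rw [← Equiv.sum_comp (MkAux.compEquiv ℓ hℓ) (fun c => MkAux.Wt m (k + 1) c.blocks)]
  rw [Fintype.sum_sum_type]
  rw [add_comm (∑ c : Composition ℓ, MkAux.Wt m (k + 1) c.blocks)]
  congr 1
  · refine Finset.sum_congr rfl fun c _ => ?_
    rw [MkAux.compEquiv_inl_blocks]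
    exact MkAux.Wt_cons_one hm hk1 hk2 _
  · refine Finset.sum_congr rfl fun c _ => ?_
    rw [MkAux.compEquiv_inr_blocks]
    rw [MkAux.Wt_cons_indep hm hk1 hk2 _ c.blocks.headI]
    rw [MkAux.headI_cons_tail (MkAux.blocks_ne_nil hℓ c)]
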